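/- Let X be a set and c : X → X → ℝ a cost function satisfying, for all x, y, z ∈ X: c(x,y) ≥ 0, c(x,x) = 0, c(x,y) = c(y,x), and c(x,z) ≤ c(x,y) + c(y,z). Fix an integer k ≥ 1 and let d_U be the induced discrepancy on weighted k-tuples. Then d_U satisfies the triangle inequality: for all weighted k-tuples (x,π), (y,ρ), (z,ν), d_U((x,π),(y,ρ)) ≤ d_U((x,π),(z,ν)) + d_U((z,ν),(y,ρ)). -/

import Mathlib

open scoped BigOperators

lemma arccos_antitone : Antitone Real.arccos := fun a b h => by
  simp only [Real.arccos]
  have := Real.monotone_arcsin h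
  linarith

/-- Spherical triangle inequality for unit vectors in a real inner product space. -/
lemma arccos_inner_triangle {E : Type*} [NormedAddCommGroup E] [InnerProductSpace ℝ E]
    (u v w : E) (hu : ‖u‖ = 1) (hv : ‖v‖ = 1) (hw : ‖w‖ = 1) :
    Real.arccos (inner ℝ u w : ℝ) ≤
      Real.arccos (inner ℝ u v : ℝ) + Real.arccos (inner ℝ v w : ℝ) := by
  set a : ℝ := inner ℝ u v with ha
  set b : ℝ := inner ℝ v w with hb
  have habs_a : |a| ≤ 1 := by
    simpa [hu, hv] using abs_real_inner_le_norm u v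
  have habs_b : |b| ≤ 1 := by
    simpa [hv, hw] using abs_real_inner_le_norm v w
  have ha1 := abs_le.mp habs_a
  have hb1 := abs_le.mp habs_b
  set α := Real.arccos a with hα
  set β := Real.arccos b with hβ
  by_cases hπ : Real.pi ≤ α + β
  · exact le_trans (Real.arccos_le_pi _) hπ
  push_neg at hπ
  -- key inner product inequality
  have hkey : Real.cos (α + β) ≤ (inner ℝ u w : ℝ) := by
    have hcosα : Real.cos α = a := Real.cos_arccos ha1.1 ha1.2
    have hcosβ : Real.cos β = b := Real.cos_arccos hb1.1 hb1.2
    have hsinα : Real.sin α = Real.sqrt (1 - a ^ 2) := Real.sin_arccos a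
    have hsinβ : Real.sin β = Real.sqrt (1 - b ^ 2) := Real.sin_arccos b
    rw [Real.cos_add, hcosα, hcosβ, hsinα, hsinβ]
    set u' := u - a • v with hu'
    set w' := w - b • v with hw'
    have hvv : (inner ℝ v v : ℝ) = 1 := by
      rw [real_inner_self_eq_norm_sq, hv]; norm_num
    have huu : (inner ℝ u u : ℝ) = 1 := by
      rw [real_inner_self_eq_norm_sq, hu]; norm_num
    have hww : (inner ℝ w w : ℝ) = 1 := by
      rw [real_inner_self_eq_norm_sq, hw]; norm_num
    have hvu : (inner ℝ v u : ℝ) = a := by rw [real_inner_comm]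
    have hwv : (inner ℝ w v : ℝ) = b := by rw [real_inner_comm]
    have huv : (inner ℝ u v : ℝ) = a := ha.symm
    have hvw : (inner ℝ v w : ℝ) = b := hb.symm
    have hiuw : (inner ℝ u' w' : ℝ) = (inner ℝ u w : ℝ) - a * b := by
      simp only [hu', hw', inner_sub_left, inner_sub_right, real_inner_smul_left,
        real_inner_smul_right, hvv, hvw, hvu, huv]
      ring
    have hnu' : ‖u'‖ ^ 2 = 1 - a ^ 2 := by
      rw [← real_inner_self_eq_norm_sq]
      simp only [hu', inner_sub_left, inner_sub_right, real_inner_smul_left,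
        real_inner_smul_right, hvv, hvu, huv, huu]
      ring
    have hnw' : ‖w'‖ ^ 2 = 1 - b ^ 2 := by
      rw [← real_inner_self_eq_norm_sq]
      simp only [hw', inner_sub_left, inner_sub_right, real_inner_smul_left,
        real_inner_smul_right, hvv, hwv, hvw, hww]
      ring
    have hnu'' : ‖u'‖ = Real.sqrt (1 - a ^ 2) := by
      rw [← hnu', Real.sqrt_sq (norm_nonneg _)]
    have hnw'' : ‖w'‖ = Real.sqrt (1 - b ^ 2) := by
      rw [← hnw', Real.sqrt_sq (norm_nonneg _)]
    have hcs : -(‖u'‖ * ‖w'‖) ≤ (inner ℝ u' w' : ℝ) := by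
      have := abs_real_inner_le_norm u' w'
      have := abs_le.mp this
      linarith [this.1]
    rw [hiuw, hnu'', hnw''] at hcs
    linarith
  calc Real.arccos (inner ℝ u w : ℝ) ≤ Real.arccos (Real.cos (α + β)) :=
        arccos_antitone hkey
    _ = α + β := Real.arccos_cos
        (by have := Real.arccos_nonneg a; have := Real.arccos_nonneg b; linarith)
        (le_of_lt hπ)

/-- The approximate Wasserstein discrepancy between two weighted `k`-tuples:
the minimum over permutations `σ` of `Fin k` of
`(1/k) · ∑ i, c (x i) (y (σ i)) + arccos (∑ i, √(w₁ i · w₂ (σ i)))`. -/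
noncomputable def dU {X : Type*} (c : X → X → ℝ) {k : ℕ}
    (x : Fin k → X) (w₁ : Fin k → ℝ) (y : Fin k → X) (w₂ : Fin k → ℝ) : ℝ :=
  Finset.univ.inf' Finset.univ_nonempty fun σ : Equiv.Perm (Fin k) =>
    (1 / (k : ℝ)) * ∑ i, c (x i) (y (σ i)) +
      Real.arccos (∑ i, Real.sqrt (w₁ i * w₂ (σ i)))

/-- **Triangle inequality for the approximate Wasserstein distance** (Theorem 1,
triangle-inequality part): if the cost `c` is nonnegative, vanishes on the diagonal,
is symmetric, and satisfies the triangle inequality, then the induced discrepancy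
`d_U` on weighted `k`-tuples satisfies the triangle inequality. -/
theorem dU_triangle {X : Type*} (c : X → X → ℝ)
    (hc_nonneg : ∀ x y, 0 ≤ c x y) (hc_self : ∀ x, c x x = 0)
    (hc_symm : ∀ x y, c x y = c y x)
    (hc_tri : ∀ x y z, c x z ≤ c x y + c y z)
    (k : ℕ) (hk : 1 ≤ k)
    (x y z : Fin k → X) (w₁ w₂ w₃ : Fin k → ℝ)
    (hw₁ : ∀ i, 0 ≤ w₁ i) (hw₁s : ∑ i, w₁ i = 1)
    (hw₂ : ∀ i, 0 ≤ w₂ i) (hw₂s : ∑ i, w₂ i = 1)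
    (hw₃ : ∀ i, 0 ≤ w₃ i) (hw₃s : ∑ i, w₃ i = 1) :
    dU c x w₁ y w₂ ≤ dU c x w₁ z w₃ + dU c z w₃ y w₂ := by
  obtain ⟨σ₁, -, h₁⟩ := Finset.exists_mem_eq_inf' (s := (Finset.univ : Finset (Equiv.Perm (Fin k))))
    Finset.univ_nonempty (fun σ : Equiv.Perm (Fin k) =>
      (1 / (k : ℝ)) * ∑ i, c (x i) (z (σ i)) +
        Real.arccos (∑ i, Real.sqrt (w₁ i * w₃ (σ i))))
  obtain ⟨σ₂, -, h₂⟩ := Finset.exists_mem_eq_inf' (s := (Finset.univ : Finset (Equiv.Perm (Fin k))))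
    Finset.univ_nonempty (fun σ : Equiv.Perm (Fin k) =>
      (1 / (k : ℝ)) * ∑ i, c (z i) (y (σ i)) +
        Real.arccos (∑ i, Real.sqrt (w₃ i * w₂ (σ i))))
  have hle : dU c x w₁ y w₂ ≤
      (1 / (k : ℝ)) * ∑ i, c (x i) (y ((σ₁.trans σ₂) i)) +
        Real.arccos (∑ i, Real.sqrt (w₁ i * w₂ ((σ₁.trans σ₂) i))) :=
    Finset.inf'_le _ (Finset.mem_univ _)
  have e₁ : dU c x w₁ z w₃ = (1 / (k : ℝ)) * ∑ i, c (x i) (z (σ₁ i)) +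
      Real.arccos (∑ i, Real.sqrt (w₁ i * w₃ (σ₁ i))) := h₁
  have e₂ : dU c z w₃ y w₂ = (1 / (k : ℝ)) * ∑ i, c (z i) (y (σ₂ i)) +
      Real.arccos (∑ i, Real.sqrt (w₃ i * w₂ (σ₂ i))) := h₂
  rw [e₁, e₂]
  refine hle.trans ?_
  -- cost part
  have hcost : (1 / (k : ℝ)) * ∑ i, c (x i) (y ((σ₁.trans σ₂) i)) ≤
      (1 / (k : ℝ)) * ∑ i, c (x i) (z (σ₁ i)) + (1 / (k : ℝ)) * ∑ i, c (z i) (y (σ₂ i)) := by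
    rw [← mul_add]
    apply mul_le_mul_of_nonneg_left _ (by positivity)
    have hre : ∑ i, c (z i) (y (σ₂ i)) = ∑ i, c (z (σ₁ i)) (y (σ₂ (σ₁ i))) :=
      (Equiv.sum_comp σ₁ (fun j => c (z j) (y (σ₂ j)))).symm
    rw [hre, ← Finset.sum_add_distrib]
    exact Finset.sum_le_sum fun i _ => hc_tri _ (z (σ₁ i)) _
  -- angle part
  set u : EuclideanSpace ℝ (Fin k) :=
    (WithLp.equiv 2 (Fin k → ℝ)).symm fun i => Real.sqrt (w₁ i) with hu_def
  set v : EuclideanSpace ℝ (Fin k) :=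
    (WithLp.equiv 2 (Fin k → ℝ)).symm fun i => Real.sqrt (w₃ (σ₁ i)) with hv_def
  set w : EuclideanSpace ℝ (Fin k) :=
    (WithLp.equiv 2 (Fin k → ℝ)).symm fun i => Real.sqrt (w₂ (σ₂ (σ₁ i))) with hw_def
  have norm_of_sum : ∀ (f : Fin k → ℝ), (∀ i, 0 ≤ f i) → (∑ i, f i) = 1 →
      ‖(WithLp.equiv 2 (Fin k → ℝ)).symm (fun i => Real.sqrt (f i))‖ = 1 := by
    intro f hf hfs
    have h2 : ‖(WithLp.equiv 2 (Fin k → ℝ)).symm (fun i => Real.sqrt (f i))‖ ^ 2 = 1 := by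
      rw [← real_inner_self_eq_norm_sq]
      simp only [PiLp.inner_apply, RCLike.inner_apply, conj_trivial,
        WithLp.equiv_symm_apply, PiLp.toLp_apply]
      rw [← hfs]
      exact Finset.sum_congr rfl fun i _ => Real.mul_self_sqrt (hf i)
    nlinarith [norm_nonneg ((WithLp.equiv 2 (Fin k → ℝ)).symm (fun i => Real.sqrt (f i)))]
  have hnu : ‖u‖ = 1 := norm_of_sum w₁ hw₁ hw₁s
  have hnv : ‖v‖ = 1 :=
    norm_of_sum (fun i => w₃ (σ₁ i)) (fun i => hw₃ _)
      ((Equiv.sum_comp σ₁ w₃).trans hw₃s)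
  have hnw : ‖w‖ = 1 :=
    norm_of_sum (fun i => w₂ (σ₂ (σ₁ i))) (fun i => hw₂ _)
      ((Equiv.sum_comp (σ₁.trans σ₂) w₂).trans hw₂s)
  have hiuv : (inner ℝ u v : ℝ) = ∑ i, Real.sqrt (w₁ i * w₃ (σ₁ i)) := by
    simp only [hu_def, hv_def, PiLp.inner_apply, RCLike.inner_apply, conj_trivial,
      WithLp.equiv_symm_apply, PiLp.toLp_apply]
    exact Finset.sum_congr rfl fun i _ => (mul_comm _ _).trans (Real.sqrt_mul (hw₁ i) _).symm
  have hivw : (inner ℝ v w : ℝ) = ∑ i, Real.sqrt (w₃ i * w₂ (σ₂ i)) := by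
    simp only [hv_def, hw_def, PiLp.inner_apply, RCLike.inner_apply, conj_trivial,
      WithLp.equiv_symm_apply, PiLp.toLp_apply]
    rw [← Equiv.sum_comp σ₁ (fun j => Real.sqrt (w₃ j * w₂ (σ₂ j)))]
    exact Finset.sum_congr rfl fun i _ => (mul_comm _ _).trans (Real.sqrt_mul (hw₃ _) _).symm
  have hiuw : (inner ℝ u w : ℝ) = ∑ i, Real.sqrt (w₁ i * w₂ ((σ₁.trans σ₂) i)) := by
    simp only [hu_def, hw_def, PiLp.inner_apply, RCLike.inner_apply, conj_trivial,
      WithLp.equiv_symm_apply, PiLp.toLp_apply]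
    exact Finset.sum_congr rfl fun i _ => (mul_comm _ _).trans (Real.sqrt_mul (hw₁ i) _).symm
  have hangle : Real.arccos (∑ i, Real.sqrt (w₁ i * w₂ ((σ₁.trans σ₂) i))) ≤
      Real.arccos (∑ i, Real.sqrt (w₁ i * w₃ (σ₁ i))) +
        Real.arccos (∑ i, Real.sqrt (w₃ i * w₂ (σ₂ i))) := by
    rw [← hiuv, ← hivw, ← hiuw]
    exact arccos_inner_triangle u v w hnu hnv hnw
  linarith
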